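/- Let A be a unital associative K-algebra, G ≤ A*, and N a nil two-sided ideal of A (every element of N is nilpotent). Then every element of the subgroup H = G ∩ (1 + N) is a unipotent element of any representation of A: for each h ∈ H there is n with (h − 1)^n = 0 in A. Moreover, if N^m = 0 then H is nilpotent as a group of class less than m. -/

import Mathlib

section Aux

variable {A : Type*} [Ring A] (N : TwoSidedIdeal A)

/-- Additive subgroup generated by products of `k` elements of `N`. -/
def nilPow (k : ℕ) : AddSubgroup A :=
  AddSubgroup.closure {a | ∃ l : List A, l.length = k ∧ (∀ x ∈ l, x ∈ N) ∧ l.prod = a}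

theorem mem_nilPow_of_mem {x : A} (hx : x ∈ N) : x ∈ nilPow N 1 :=
  AddSubgroup.subset_closure ⟨[x], rfl, by simpa using hx, by simp⟩

theorem nilPow_mul_left (k : ℕ) (r : A) {x : A} (hx : x ∈ nilPow N (k + 1)) :
    r * x ∈ nilPow N (k + 1) := by
  induction hx using AddSubgroup.closure_induction with
  | mem a ha =>
    obtain ⟨l, hlen, hmem, hprod⟩ := ha
    match l, hlen with
    | y :: t, hlen =>
      refine AddSubgroup.subset_closure ⟨(r * y) :: t, by simpa using hlen, ?_, ?_⟩
      · intro x hx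
        rcases List.mem_cons.1 hx with h | h
        · exact h ▸ N.mul_mem_left r y (hmem y List.mem_cons_self)
        · exact hmem x (List.mem_cons_of_mem _ h)
      · simp [← hprod, List.prod_cons, mul_assoc]
  | zero => simpa using (nilPow N (k + 1)).zero_mem
  | add a b _ _ ha hb => rw [mul_add]; exact (nilPow N (k + 1)).add_mem ha hb
  | neg a _ ha => rw [mul_neg]; exact (nilPow N (k + 1)).neg_mem ha

theorem nilPow_mul_right (k : ℕ) (r : A) {x : A} (hx : x ∈ nilPow N (k + 1)) :
    x * r ∈ nilPow N (k + 1) := by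
  induction hx using AddSubgroup.closure_induction with
  | mem a ha =>
    obtain ⟨l, hlen, hmem, hprod⟩ := ha
    rcases List.eq_nil_or_concat l with rfl | ⟨t, y, rfl⟩
    · simp at hlen
    · simp only [List.concat_eq_append] at hlen hmem hprod
      refine AddSubgroup.subset_closure ⟨t ++ [y * r], by simpa using hlen, ?_, ?_⟩
      · intro x hx
        rcases List.mem_append.1 hx with h | h
        · exact hmem x (List.mem_append.2 (Or.inl h))
        · simp only [List.mem_singleton] at h
          exact h ▸ N.mul_mem_right y r (hmem y (by simp))
      · simp [← hprod, mul_assoc]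
  | zero => simpa using (nilPow N (k + 1)).zero_mem
  | add a b _ _ ha hb => rw [add_mul]; exact (nilPow N (k + 1)).add_mem ha hb
  | neg a _ ha => rw [neg_mul]; exact (nilPow N (k + 1)).neg_mem ha

theorem nilPow_mul_mem_N {i : ℕ} {x y : A} (hx : x ∈ nilPow N i) (hy : y ∈ N) :
    x * y ∈ nilPow N (i + 1) := by
  induction hx using AddSubgroup.closure_induction with
  | mem a ha =>
    obtain ⟨l, hlen, hmem, hprod⟩ := ha
    refine AddSubgroup.subset_closure ⟨l ++ [y], by simp [hlen], ?_, ?_⟩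
    · intro x hx
      rcases List.mem_append.1 hx with h | h
      · exact hmem x h
      · simp only [List.mem_singleton] at h
        exact h ▸ hy
    · simp [← hprod]
  | zero => simpa using (nilPow N (i + 1)).zero_mem
  | add a b _ _ ha hb => rw [add_mul]; exact (nilPow N (i + 1)).add_mem ha hb
  | neg a _ ha => rw [neg_mul]; exact (nilPow N (i + 1)).neg_mem ha

theorem nilPow_N_mul_mem {i : ℕ} {x y : A} (hy : y ∈ N) (hx : x ∈ nilPow N i) :
    y * x ∈ nilPow N (i + 1) := by
  induction hx using AddSubgroup.closure_induction with
  | mem a ha =>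
    obtain ⟨l, hlen, hmem, hprod⟩ := ha
    refine AddSubgroup.subset_closure ⟨y :: l, by simp [hlen], ?_, ?_⟩
    · intro x hx
      rcases List.mem_cons.1 hx with h | h
      · exact h ▸ hy
      · exact hmem x h
    · simp [← hprod]
  | zero => simpa using (nilPow N (i + 1)).zero_mem
  | add a b _ _ ha hb => rw [mul_add]; exact (nilPow N (i + 1)).add_mem ha hb
  | neg a _ ha => rw [mul_neg]; exact (nilPow N (i + 1)).neg_mem ha

theorem nilPow_eq_zero {m : ℕ}
    (hm : ∀ l : List A, l.length = m → (∀ x ∈ l, x ∈ N) → l.prod = 0)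
    {x : A} (hx : x ∈ nilPow N m) : x = 0 := by
  induction hx using AddSubgroup.closure_induction with
  | mem a ha =>
    obtain ⟨l, hlen, hmem, hprod⟩ := ha
    rw [← hprod]; exact hm l hlen hmem
  | zero => rfl
  | add a b _ _ ha hb => rw [ha, hb, add_zero]
  | neg a _ ha => rw [ha, neg_zero]

end Aux

open scoped commutatorElement

theorem one_plus_nil_ideal_subgroup_unipotent_and_nilpotent
    {K A : Type*} [Field K] [Ring A] [Algebra K A]
    (G : Subgroup Aˣ) (N : TwoSidedIdeal A)
    (hnil : ∀ x ∈ N, IsNilpotent x) :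
    (∀ h : G, ((h : Aˣ) : A) - 1 ∈ N → ∃ n : ℕ, (((h : Aˣ) : A) - 1) ^ n = 0) ∧
    (∀ m : ℕ, (∀ l : List A, l.length = m → (∀ x ∈ l, x ∈ N) → l.prod = 0) →
      ∀ H : Subgroup G, ((H : Set G) = {g : G | ((g : Aˣ) : A) - 1 ∈ N}) →
        lowerCentralSeries H (m - 1) = ⊥) := by
  constructor
  · intro h hh
    exact hnil _ hh
  · intro m hm H hH
    -- coercion of an element of H down to A
    set coeA : G → A := fun x => ((x : Aˣ) : A) with hcoeA
    have coeA_mul : ∀ x y : G, coeA (x * y) = coeA x * coeA y := by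
      intro x y; simp [hcoeA]
    have coeA_one : coeA 1 = 1 := by simp [hcoeA]
    have coeA_inv_mul : ∀ x : G, coeA x⁻¹ * coeA x = 1 := by
      intro x; rw [← coeA_mul, inv_mul_cancel, coeA_one]
    have coeA_mul_inv : ∀ x : G, coeA x * coeA x⁻¹ = 1 := by
      intro x; rw [← coeA_mul, mul_inv_cancel, coeA_one]
    -- every element of H satisfies the membership condition
    have base : ∀ x : G, x ∈ H → coeA x - 1 ∈ N := by
      intro x hxH
      have hx : x ∈ (H : Set G) := hxH
      rw [hH] at hx
      exact hx
    rcases m with - | m'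
    · -- m = 0 : the ring is trivial
      have h10 : (1 : A) = 0 := by simpa using hm [] rfl (by simp)
      rw [eq_bot_iff]
      intro x _
      rw [Subgroup.mem_bot]
      have : coeA x = coeA 1 := by
        haveI : Subsingleton A := subsingleton_of_zero_eq_one h10.symm
        exact Subsingleton.elim _ _
      have hAx : (x : Aˣ) = ((1 : G) : Aˣ) := by
        apply Units.ext
        simpa [hcoeA] using this
      exact Subtype.ext hAx
    · -- m = m' + 1
      -- the filtration subgroups
      have levelMul : ∀ (n : ℕ) (x y : G), coeA x - 1 ∈ nilPow N (n + 1) →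
          coeA y - 1 ∈ nilPow N (n + 1) → coeA (x * y) - 1 ∈ nilPow N (n + 1) := by
        intro n x y hx hy
        have : coeA (x * y) - 1 =
            (coeA x - 1) * (coeA y - 1) + (coeA x - 1) + (coeA y - 1) := by
          rw [coeA_mul]; noncomm_ring
        rw [this]
        exact ((nilPow N (n + 1)).add_mem
          ((nilPow N (n + 1)).add_mem (nilPow_mul_left N n _ hy) hx) hy)
      have levelInv : ∀ (n : ℕ) (x : G), coeA x - 1 ∈ nilPow N (n + 1) →
          coeA x⁻¹ - 1 ∈ nilPow N (n + 1) := by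
        intro n x hx
        have : coeA x⁻¹ - 1 = -(coeA x⁻¹ * (coeA x - 1)) := by
          rw [mul_sub, coeA_inv_mul, mul_one, neg_sub]
        rw [this]
        exact (nilPow N (n + 1)).neg_mem (nilPow_mul_left N n _ hx)
      let level : ℕ → Subgroup G := fun n =>
        { carrier := {x : G | coeA x - 1 ∈ nilPow N (n + 1)}
          one_mem' := by
            simp only [Set.mem_setOf_eq, coeA_one, sub_self]
            exact (nilPow N (n + 1)).zero_mem
          mul_mem' := fun hx hy => levelMul _ _ _ hx hy
          inv_mem' := fun hx => levelInv _ _ hx }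
      have hlevel_mem : ∀ (n : ℕ) (x : G),
          x ∈ level n ↔ coeA x - 1 ∈ nilPow N (n + 1) := fun n x => Iff.rfl
      -- commutator estimate
      have comm_step : ∀ (n : ℕ) (g h : G), g ∈ level n → h ∈ H →
          ⁅g, h⁆ ∈ level (n + 1) := by
        intro n g h hg hhH
        rw [hlevel_mem]
        have hb : coeA h - 1 ∈ N := base h hhH
        set u := coeA g
        set v := coeA h
        set u' := coeA g⁻¹
        set v' := coeA h⁻¹
        have hcomm : coeA ⁅g, h⁆ = u * v * u' * v' := by
          rw [commutatorElement_def, coeA_mul, coeA_mul, coeA_mul]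
        have huu' : u * u' = 1 := coeA_mul_inv g
        have hvv' : v * v' = 1 := coeA_mul_inv h
        have key : coeA ⁅g, h⁆ - 1 =
            ((u - 1) * (v - 1) - (v - 1) * (u - 1)) * (u' * v') := by
          rw [hcomm]
          have h1 : ((u - 1) * (v - 1) - (v - 1) * (u - 1)) = u * v - v * u := by
            noncomm_ring
          rw [h1, sub_mul]
          have h2 : v * u * (u' * v') = 1 := by
            rw [mul_assoc v u, ← mul_assoc u u', huu', one_mul, hvv']
          rw [h2]
          congr 1
          rw [mul_assoc, mul_assoc]
        rw [key]
        apply nilPow_mul_right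
        exact (nilPow N (n + 1 + 1)).sub_mem (nilPow_mul_mem_N N hg hb)
          (nilPow_N_mul_mem N hb hg)
      -- lower central series is contained in the filtration
      have hLCS : ∀ n : ℕ, H.lowerCentralSeries n ≤ level n := by
        intro n
        induction n with
        | zero =>
          intro x hxH
          rw [hlevel_mem]
          exact mem_nilPow_of_mem N (base x hxH)
        | succ n ih =>
          show ⁅H.lowerCentralSeries n, H⁆ ≤ level (n + 1)
          rw [Subgroup.commutator_le]
          intro g hg h hhH
          exact comm_step n g h (ih hg) hhH
      show H.lowerCentralSeries (m' + 1 - 1) = ⊥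
      rw [Nat.add_sub_cancel, eq_bot_iff]
      intro x hx
      have hx' := hLCS m' hx
      rw [hlevel_mem] at hx'
      have h0 : coeA x - 1 = 0 := nilPow_eq_zero N hm hx'
      have h1 : coeA x = coeA 1 := by rw [coeA_one]; exact sub_eq_zero.mp h0
      rw [Subgroup.mem_bot]
      have hAx : (x : Aˣ) = ((1 : G) : Aˣ) := by
        apply Units.ext
        simpa [hcoeA] using h1
      exact Subtype.ext hAx
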